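/- arXiv:2406.11137 — 3 statements merged into one kernel-verified Lean document; each statement's English description precedes it below -/
import Mathlib

section
/- Let α > 1. There exist constants c₁, c₂ > 0 such that every holomorphic function f on D with sup_{z∈D} |f'(z)|(1-|z|²)^α < ∞ satisfies c₁ (|f(0)| + sup_{z∈D} |f'(z)|(1-|z|²)^α) ≤ sup_{z∈D} |f(z)|(1-|z|²)^{α-1} ≤ c₂ (|f(0)| + sup_{z∈D} |f'(z)|(1-|z|²)^α). -/
open MeasureTheory Complex Real Filter ENNReal NNReal

noncomputable section

def UD : Set ℂ := Metric.ball 0 1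

/-- Carleson tent over the subarc of the unit circle of normalized length `h`
centered at `e^{iθ}`. -/
def tent (θ h : ℝ) : Set ℂ :=
  {z : ℂ | ‖z‖ < 1 ∧ 1 - h < ‖z‖ ∧
    ∃ φ : ℝ, |φ - θ| ≤ Real.pi * h ∧ z = (‖z‖ : ℂ) * Complex.exp (φ * Complex.I)}

/-- Disc automorphism `φ_a`. -/
def moeb (a z : ℂ) : ℂ := (a - z) / (1 - (starRingEnd ℂ) a * z)

/-- `Q_t` norm (as an extended real number). -/
def qNorm (t : ℝ) (f : ℂ → ℂ) : ℝ≥0∞ :=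
  ENNReal.ofReal (‖f 0‖) +
    (⨆ a ∈ UD, ∫⁻ z in UD, ENNReal.ofReal
      (‖deriv f z‖ ^ 2 * (1 - ‖moeb a z‖ ^ 2) ^ t)) ^ (1/2 : ℝ)

/-- `F(p, q, s)` norm (as an extended real number). -/
def fNorm (p q s : ℝ) (f : ℂ → ℂ) : ℝ≥0∞ :=
  ENNReal.ofReal (‖f 0‖) +
    (⨆ a ∈ UD, ∫⁻ z in UD, ENNReal.ofReal
      (‖deriv f z‖ ^ p * (1 - ‖z‖ ^ 2) ^ q *
        (1 - ‖moeb a z‖ ^ 2) ^ s)) ^ (1/p)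

set_option maxHeartbeats 1000000
lemma mem_UD_iff {z : ℂ} : z ∈ UD ↔ ‖z‖ < 1 := by
  simp [UD, Metric.mem_ball, Complex.dist_eq]

lemma growth (α : ℝ) (hα : 1 < α) (f : ℂ → ℂ) (hf : DifferentiableOn ℂ f UD)
    (M : ℝ) (hM : ∀ z ∈ UD, ‖deriv f z‖ * (1 - ‖z‖ ^ 2) ^ α ≤ M)
    {z : ℂ} (hz : z ∈ UD) :
    ‖f z - f 0‖ ≤
      M / (α - 1) * ((1 - ‖z‖) ^ (1 - α) - 1) := by
  have hUDopen : IsOpen UD := Metric.isOpen_ball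
  set r : ℝ := ‖z‖ with hrdef
  clear_value r
  have hr0 : 0 ≤ r := hrdef ▸ norm_nonneg z
  have hr1 : r < 1 := hrdef ▸ mem_UD_iff.mp hz
  -- membership of points on the segment
  have hmem : ∀ t : ℝ, t ∈ Set.Icc (0:ℝ) 1 → (↑t * z : ℂ) ∈ UD := by
    intro t ht
    rw [mem_UD_iff]
    rw [norm_mul, Complex.norm_real, Real.norm_eq_abs, _root_.abs_of_nonneg ht.1, ← hrdef]
    calc t * r ≤ 1 * r := by nlinarith [ht.2]
    _ = r := one_mul r
    _ < 1 := hr1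
  have hbase : ∀ t : ℝ, t ∈ Set.Icc (0:ℝ) 1 → 0 < 1 - t * r := by
    intro t ht
    nlinarith [ht.1, ht.2]
  -- derivative of g
  set g : ℝ → ℂ := fun t => f (↑t * z) - f 0 with hgdef
  clear_value g
  have hg : ∀ t ∈ Set.Icc (0:ℝ) 1, HasDerivAt g (deriv f (↑t * z) * z) t := by
    intro t ht
    have h1 : HasDerivAt (fun w : ℂ => w * z) z (↑t : ℂ) := hasDerivAt_mul_const z
    have h2 : DifferentiableAt ℂ f (↑t * z) :=
      hf.differentiableAt (hUDopen.mem_nhds (hmem t ht))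
    have h3 : HasDerivAt (fun w : ℂ => f (w * z)) (deriv f (↑t * z) * z) (↑t : ℂ) :=
      HasDerivAt.comp _ h2.hasDerivAt h1
    rw [hgdef]
    exact (h3.comp_ofReal).sub_const (f 0)
  -- boundary function
  set B : ℝ → ℝ := fun t => M / (α - 1) * ((1 - t * r) ^ (1 - α) - 1) with hBdef
  clear_value B
  set B' : ℝ → ℝ := fun t => M * r * (1 - t * r) ^ (-α) with hB'def
  clear_value B'
  have hB : ∀ t ∈ Set.Icc (0:ℝ) 1, HasDerivAt B (B' t) t := by
    intro t ht
    have hu : HasDerivAt (fun t : ℝ => 1 - t * r) (-r) t := by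
      simpa using ((hasDerivAt_id t).mul_const r).const_sub 1
    have hrpow : HasDerivAt (fun t : ℝ => (1 - t * r) ^ (1 - α))
        ((-r) * (1 - α) * (1 - t * r) ^ (1 - α - 1)) t := by
      have := hu.rpow_const (p := 1 - α) (Or.inl (hbase t ht).ne')
      simpa [mul_comm, mul_assoc, mul_left_comm] using this
    have h := ((hrpow.sub_const 1).const_mul (M / (α - 1)))
    convert h using 1
    any_goals rfl
    have he : (1 : ℝ) - α - 1 = -α := by ring
    rw [he]
    have hα1 : α - 1 ≠ 0 := by linarith
    rw [hB'def]
    field_simp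
    ring
  have hbound : ∀ t ∈ Set.Ico (0:ℝ) 1, ‖deriv f (↑t * z) * z‖ ≤ B' t := by
    intro t ht
    have ht' : t ∈ Set.Icc (0:ℝ) 1 := ⟨ht.1, ht.2.le⟩
    have hb := hbase t ht'
    have htr0 : 0 ≤ t * r := mul_nonneg ht.1 hr0
    have htr1 : t * r < 1 := by linarith
    have habs : ‖(↑t * z : ℂ)‖ = t * r := by
      rw [norm_mul, Complex.norm_real, Real.norm_eq_abs, _root_.abs_of_nonneg ht.1, ← hrdef]
    have key : ‖deriv f (↑t * z)‖ * (1 - t * r) ^ α ≤ M := by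
      have h1 : (1 - t * r) ^ α ≤ (1 - (t * r) ^ 2) ^ α := by
        apply Real.rpow_le_rpow hb.le _ (by linarith)
        nlinarith
      calc ‖deriv f (↑t * z)‖ * (1 - t * r) ^ α
          ≤ ‖deriv f (↑t * z)‖ * (1 - (t * r) ^ 2) ^ α :=
            mul_le_mul_of_nonneg_left h1 (norm_nonneg _)
        _ ≤ M := by
            have := hM _ (hmem t ht')
            rwa [habs] at this
    have hM0 : 0 ≤ M := le_trans (by positivity) key
    rw [norm_mul, ← hrdef]
    have hd : ‖deriv f (↑t * z)‖ ≤ M * (1 - t * r) ^ (-α) := by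
      rw [Real.rpow_neg hb.le, ← div_eq_mul_inv, le_div_iff₀ (Real.rpow_pos_of_pos hb α)]
      exact key
    calc ‖deriv f (↑t * z)‖ * r
        ≤ (M * (1 - t * r) ^ (-α)) * r := mul_le_mul_of_nonneg_right hd hr0
      _ = B' t := by rw [hB'def]; ring
  have hcont : ContinuousOn g (Set.Icc (0:ℝ) 1) :=
    fun t ht => ((hg t ht).continuousAt).continuousWithinAt
  have hBcont : ContinuousOn B (Set.Icc (0:ℝ) 1) :=
    fun t ht => ((hB t ht).continuousAt).continuousWithinAt
  have h0 : ‖g 0‖ ≤ B 0 := by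
    simp [hgdef, hBdef]
  have := image_norm_le_of_norm_deriv_right_le_deriv_boundary' hcont
    (fun t ht => (hg t (Set.Ico_subset_Icc_self ht)).hasDerivWithinAt) h0 hBcont
    (fun t ht => (hB t (Set.Ico_subset_Icc_self ht)).hasDerivWithinAt) hbound
    (Set.right_mem_Icc.mpr zero_le_one)
  have h1 : g 1 = f z - f 0 := by simp [hgdef]
  rw [h1, hBdef] at this
  simp only [one_mul] at this
  exact this

lemma cauchyEst (α : ℝ) (hα : 1 < α) (f : ℂ → ℂ) (hf : DifferentiableOn ℂ f UD)
    (S : ℝ) (hS : ∀ w ∈ UD, ‖f w‖ * (1 - ‖w‖ ^ 2) ^ (α - 1) ≤ S)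
    {z : ℂ} (hz : z ∈ UD) :
    ‖deriv f z‖ * (1 - ‖z‖ ^ 2) ^ α ≤ (4:ℝ) ^ α * S := by
  have hz1 : ‖z‖ < 1 := mem_UD_iff.mp hz
  have hz0 : 0 ≤ ‖z‖ := norm_nonneg z
  set ρ : ℝ := (1 - ‖z‖) / 2 with hρdef
  have hρ : 0 < ρ := by rw [hρdef]; linarith
  have hS0 : 0 ≤ S := by
    have := hS 0 (by rw [mem_UD_iff]; simp)
    simp only [norm_zero, map_zero, ne_eq, OfNat.ofNat_ne_zero, not_false_eq_true, zero_pow, sub_zero,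
      Real.one_rpow, mul_one] at this
    exact le_trans (norm_nonneg _) this
  -- the closed ball is inside UD
  have hsub : Metric.closedBall z ρ ⊆ UD := by
    intro w hw
    rw [Metric.mem_closedBall, Complex.dist_eq] at hw
    rw [mem_UD_iff]
    calc ‖w‖ = ‖z + (w - z)‖ := by ring_nf
      _ ≤ ‖z‖ + ‖w - z‖ := norm_add_le _ _
      _ ≤ ‖z‖ + ρ := by linarith
      _ < 1 := by rw [hρdef]; linarith
  have hdc : DiffContOnCl ℂ f (Metric.ball z ρ) :=
    ⟨hf.mono ((Metric.ball_subset_closedBall).trans hsub),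
      (hf.continuousOn).mono ((Metric.closure_ball_subset_closedBall).trans hsub)⟩
  set C : ℝ := S / ρ ^ (α - 1) with hCdef
  have hC : ∀ w ∈ Metric.sphere z ρ, ‖f w‖ ≤ C := by
    intro w hw
    have hw' : w ∈ Metric.closedBall z ρ := Metric.sphere_subset_closedBall hw
    have hwUD : w ∈ UD := hsub hw'
    have hw1 : ‖w‖ < 1 := mem_UD_iff.mp hwUD
    have hwz : ‖w - z‖ ≤ ρ := by
      rw [Metric.mem_closedBall, Complex.dist_eq] at hw'
      exact hw'
    have hwab : ‖w‖ ≤ ‖z‖ + ρ := by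
      calc ‖w‖ = ‖z + (w - z)‖ := by ring_nf
        _ ≤ ‖z‖ + ‖w - z‖ := norm_add_le _ _
        _ ≤ ‖z‖ + ρ := by linarith
    have hlow : ρ ≤ 1 - ‖w‖ ^ 2 := by
      have h1 : ‖w‖ ^ 2 ≤ ‖w‖ := by
        nlinarith [norm_nonneg w]
      have h2 : ‖w‖ ≤ 1 - ρ := by rw [hρdef] at *; linarith
      linarith
    have hρpow : ρ ^ (α - 1) ≤ (1 - ‖w‖ ^ 2) ^ (α - 1) :=
      Real.rpow_le_rpow hρ.le hlow (by linarith)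
    have hpos : (0:ℝ) < (1 - ‖w‖ ^ 2) ^ (α - 1) :=
      Real.rpow_pos_of_pos (lt_of_lt_of_le hρ hlow) _
    rw [hCdef]
    rw [le_div_iff₀ (Real.rpow_pos_of_pos hρ _)]
    calc ‖f w‖ * ρ ^ (α - 1)
        ≤ ‖f w‖ * (1 - ‖w‖ ^ 2) ^ (α - 1) :=
          mul_le_mul_of_nonneg_left hρpow (norm_nonneg _)
      _ ≤ S := hS w hwUD
  have hderiv : ‖deriv f z‖ ≤ C / ρ :=
    Complex.norm_deriv_le_of_forall_mem_sphere_norm_le hρ hdc hC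
  have hCρ : C / ρ = S / ρ ^ α := by
    rw [hCdef, div_div, ← Real.rpow_add_one hρ.ne' (α - 1)]
    norm_num
  have hA0 : 0 ≤ 1 - ‖z‖ ^ 2 := by nlinarith
  have hAρ : (1 - ‖z‖ ^ 2) / ρ ≤ 4 := by
    rw [hρdef, div_div_eq_mul_div, div_le_iff₀ (by linarith : (0:ℝ) < 1 - ‖z‖)]
    nlinarith
  calc ‖deriv f z‖ * (1 - ‖z‖ ^ 2) ^ α
      ≤ (S / ρ ^ α) * (1 - ‖z‖ ^ 2) ^ α := by
        apply mul_le_mul_of_nonneg_right _ (Real.rpow_nonneg hA0 α)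
        rw [← hCρ]; exact hderiv
    _ = S * ((1 - ‖z‖ ^ 2) / ρ) ^ α := by
        rw [Real.div_rpow hA0 hρ.le]; ring
    _ ≤ S * (4:ℝ) ^ α := by
        apply mul_le_mul_of_nonneg_left _ hS0
        exact Real.rpow_le_rpow (by positivity) hAρ (by linarith)
    _ = (4:ℝ) ^ α * S := mul_comm _ _

lemma upper_pt (α : ℝ) (hα : 1 < α) (f : ℂ → ℂ) (hf : DifferentiableOn ℂ f UD)
    (M : ℝ) (hM0 : 0 ≤ M)
    (hM : ∀ z ∈ UD, ‖deriv f z‖ * (1 - ‖z‖ ^ 2) ^ α ≤ M)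
    {z : ℂ} (hz : z ∈ UD) :
    ‖f z‖ * (1 - ‖z‖ ^ 2) ^ (α - 1) ≤
      max 1 ((2:ℝ) ^ (α - 1) / (α - 1)) * (‖f 0‖ + M) := by
  have hr1 : ‖z‖ < 1 := mem_UD_iff.mp hz
  have hr0 : 0 ≤ ‖z‖ := norm_nonneg z
  have h1r : (0:ℝ) < 1 - ‖z‖ := by linarith
  have h1sq : (0:ℝ) ≤ 1 - ‖z‖ ^ 2 := by nlinarith
  have hgr := growth α hα f hf M hM hz
  have habs : ‖f z‖ ≤ ‖f 0‖ +
      M / (α - 1) * ((1 - ‖z‖) ^ (1 - α) - 1) := by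
    calc ‖f z‖ = ‖f 0 + (f z - f 0)‖ := by ring_nf
      _ ≤ ‖f 0‖ + ‖f z - f 0‖ := norm_add_le _ _
      _ ≤ _ := by linarith
  set A : ℝ := (1 - ‖z‖ ^ 2) ^ (α - 1) with hAdef
  have hA0 : 0 ≤ A := Real.rpow_nonneg h1sq _
  have hA1 : A ≤ 1 := Real.rpow_le_one h1sq (by nlinarith) (by linarith)
  have hc0 : 0 ≤ M / (α - 1) := div_nonneg hM0 (by linarith)
  have hprod : (1 - ‖z‖) ^ (1 - α) * A ≤ (2:ℝ) ^ (α - 1) := by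
    have hfac : (1 - ‖z‖ ^ 2) / (1 - ‖z‖) = 1 + ‖z‖ := by
      field_simp
      ring
    have heq : (1 - ‖z‖) ^ (1 - α) * A = (1 + ‖z‖) ^ (α - 1) := by
      calc (1 - ‖z‖) ^ (1 - α) * A
          = (1 - ‖z‖ ^ 2) ^ (α - 1) / (1 - ‖z‖) ^ (α - 1) := by
            rw [show (1:ℝ) - α = -(α - 1) by ring, Real.rpow_neg h1r.le, hAdef]
            ring
        _ = ((1 - ‖z‖ ^ 2) / (1 - ‖z‖)) ^ (α - 1) :=
            (Real.div_rpow h1sq h1r.le _).symm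
        _ = (1 + ‖z‖) ^ (α - 1) := by rw [hfac]
    rw [heq]
    exact Real.rpow_le_rpow (by linarith) (by linarith) (by linarith)
  have hF0 : 0 ≤ ‖f 0‖ := norm_nonneg _
  have step : ‖f z‖ * A ≤
      ‖f 0‖ + M / (α - 1) * ((2:ℝ) ^ (α - 1)) := by
    have s1 : ‖f z‖ * A ≤ (‖f 0‖ +
        M / (α - 1) * ((1 - ‖z‖) ^ (1 - α) - 1)) * A :=
      mul_le_mul_of_nonneg_right habs hA0
    have s4 : M / (α - 1) * ((1 - ‖z‖) ^ (1 - α) * A) ≤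
        M / (α - 1) * ((2:ℝ) ^ (α - 1)) := mul_le_mul_of_nonneg_left hprod hc0
    nlinarith [mul_nonneg hc0 hA0, mul_nonneg hF0 (sub_nonneg.mpr hA1)]
  have hq : M / (α - 1) * ((2:ℝ) ^ (α - 1)) = (2:ℝ) ^ (α - 1) / (α - 1) * M := by
    ring
  set q : ℝ := (2:ℝ) ^ (α - 1) / (α - 1) with hqdef
  have h1le : (1:ℝ) ≤ max 1 q := le_max_left _ _
  have hqle : q ≤ max 1 q := le_max_right _ _
  calc ‖f z‖ * A ≤ ‖f 0‖ + q * M := by rw [← hq]; exact step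
    _ ≤ max 1 q * (‖f 0‖ + M) := by
        nlinarith [mul_nonneg (by linarith : (0:ℝ) ≤ max 1 q - 1) hF0,
          mul_nonneg (by linarith : (0:ℝ) ≤ max 1 q - q) hM0]

/-- equivalent seminorm on the α-Bloch space. -/
theorem stmt9 (α : ℝ) (hα : 1 < α) :
    ∃ c₁ c₂ : ℝ, 0 < c₁ ∧ 0 < c₂ ∧ ∀ f : ℂ → ℂ, DifferentiableOn ℂ f UD →
      (⨆ z ∈ UD, ENNReal.ofReal (‖deriv f z‖ * (1 - ‖z‖ ^ 2) ^ α)) < ⊤ →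
      (ENNReal.ofReal c₁ * (ENNReal.ofReal (‖f 0‖) +
          ⨆ z ∈ UD, ENNReal.ofReal (‖deriv f z‖ * (1 - ‖z‖ ^ 2) ^ α)) ≤
        ⨆ z ∈ UD, ENNReal.ofReal (‖f z‖ * (1 - ‖z‖ ^ 2) ^ (α - 1))) ∧
      ((⨆ z ∈ UD, ENNReal.ofReal (‖f z‖ * (1 - ‖z‖ ^ 2) ^ (α - 1))) ≤
        ENNReal.ofReal c₂ * (ENNReal.ofReal (‖f 0‖) +
          ⨆ z ∈ UD, ENNReal.ofReal (‖deriv f z‖ * (1 - ‖z‖ ^ 2) ^ α))) := by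
  have h4pos : (0:ℝ) < 4 ^ α := Real.rpow_pos_of_pos (by norm_num) α
  refine ⟨((1:ℝ) + 4 ^ α)⁻¹, max 1 ((2:ℝ) ^ (α - 1) / (α - 1)),
    by positivity, lt_of_lt_of_le one_pos (le_max_left _ _), ?_⟩
  intro f hf hT
  set T := (⨆ z ∈ UD, ENNReal.ofReal
    (‖deriv f z‖ * (1 - ‖z‖ ^ 2) ^ α)) with hTdef
  set S2 := (⨆ z ∈ UD, ENNReal.ofReal
    (‖f z‖ * (1 - ‖z‖ ^ 2) ^ (α - 1))) with hS2def
  have hTne : T ≠ ⊤ := hT.ne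
  have hM0 : (0:ℝ) ≤ T.toReal := ENNReal.toReal_nonneg
  have hnn : ∀ z : ℂ, z ∈ UD → 0 ≤ ‖deriv f z‖ * (1 - ‖z‖ ^ 2) ^ α := by
    intro z hz
    have h1 : ‖z‖ < 1 := mem_UD_iff.mp hz
    have h2 : (0:ℝ) ≤ 1 - ‖z‖ ^ 2 := by nlinarith [norm_nonneg z]
    exact mul_nonneg (norm_nonneg _) (Real.rpow_nonneg h2 _)
  have hnn' : ∀ z : ℂ, z ∈ UD → 0 ≤ ‖f z‖ * (1 - ‖z‖ ^ 2) ^ (α - 1) := by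
    intro z hz
    have h1 : ‖z‖ < 1 := mem_UD_iff.mp hz
    have h2 : (0:ℝ) ≤ 1 - ‖z‖ ^ 2 := by nlinarith [norm_nonneg z]
    exact mul_nonneg (norm_nonneg _) (Real.rpow_nonneg h2 _)
  have hMpt : ∀ z ∈ UD, ‖deriv f z‖ * (1 - ‖z‖ ^ 2) ^ α ≤ T.toReal := by
    intro z hz
    have h1 : ENNReal.ofReal (‖deriv f z‖ * (1 - ‖z‖ ^ 2) ^ α) ≤ T := by
      rw [hTdef]
      exact le_iSup₂ (f := fun z (_ : z ∈ UD) =>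
        ENNReal.ofReal (‖deriv f z‖ * (1 - ‖z‖ ^ 2) ^ α)) z hz
    have h2 := ENNReal.toReal_mono hTne h1
    rwa [ENNReal.toReal_ofReal (hnn z hz)] at h2
  have hTof : ENNReal.ofReal T.toReal = T := ENNReal.ofReal_toReal hTne
  constructor
  · -- lower bound
    by_cases hS2top : S2 = ⊤
    · rw [hS2top]; exact le_top
    have hSpt : ∀ w ∈ UD, ‖f w‖ * (1 - ‖w‖ ^ 2) ^ (α - 1) ≤ S2.toReal := by
      intro w hw
      have h1 : ENNReal.ofReal (‖f w‖ * (1 - ‖w‖ ^ 2) ^ (α - 1)) ≤ S2 := by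
        rw [hS2def]
        exact le_iSup₂ (f := fun z (_ : z ∈ UD) =>
          ENNReal.ofReal (‖f z‖ * (1 - ‖z‖ ^ 2) ^ (α - 1))) w hw
      have h2 := ENNReal.toReal_mono hS2top h1
      rwa [ENNReal.toReal_ofReal (hnn' w hw)] at h2
    have hTle : T ≤ ENNReal.ofReal ((4:ℝ) ^ α) * S2 := by
      rw [← ENNReal.ofReal_toReal hS2top, ← ENNReal.ofReal_mul h4pos.le, hTdef]
      refine iSup₂_le fun z hz => ENNReal.ofReal_le_ofReal ?_
      exact cauchyEst α hα f hf _ hSpt hz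
    have hf0le : ENNReal.ofReal (‖f 0‖) ≤ S2 := by
      have h0 : (0:ℂ) ∈ UD := by rw [mem_UD_iff]; simp
      have h1 := le_iSup₂ (f := fun z (_ : z ∈ UD) =>
        ENNReal.ofReal (‖f z‖ * (1 - ‖z‖ ^ 2) ^ (α - 1))) 0 h0
      rw [← hS2def] at h1
      simpa using h1
    calc ENNReal.ofReal ((1:ℝ) + 4 ^ α)⁻¹ * (ENNReal.ofReal (‖f 0‖) + T)
        ≤ ENNReal.ofReal ((1:ℝ) + 4 ^ α)⁻¹ * (S2 + ENNReal.ofReal ((4:ℝ) ^ α) * S2) :=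
          mul_le_mul_right (add_le_add hf0le hTle) _
      _ = ENNReal.ofReal ((1:ℝ) + 4 ^ α)⁻¹ * (ENNReal.ofReal ((1:ℝ) + 4 ^ α) * S2) := by
          rw [ENNReal.ofReal_add zero_le_one h4pos.le, ENNReal.ofReal_one, add_mul, one_mul]
      _ = (ENNReal.ofReal ((1:ℝ) + 4 ^ α)⁻¹ * ENNReal.ofReal ((1:ℝ) + 4 ^ α)) * S2 := by
          rw [mul_assoc]
      _ = S2 := by
          rw [← ENNReal.ofReal_mul (by positivity), inv_mul_cancel₀ (by positivity),
            ENNReal.ofReal_one, one_mul]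
  · -- upper bound
    rw [← hTof, ← ENNReal.ofReal_add (norm_nonneg _) hM0,
      ← ENNReal.ofReal_mul (le_trans zero_le_one (le_max_left _ _)), hS2def]
    refine iSup₂_le fun z hz => ENNReal.ofReal_le_ofReal ?_
    exact upper_pt α hα f hf _ hM0 hMpt hz
end
end

section
/- Let 0 < s ≤ 1 and let μ be a positive finite Borel s-Carleson measure on D. For 0 < r < 1 let μ_r be the restriction of μ to {z ∈ D : |z| < r}. Then μ is a vanishing s-Carleson measure (i.e. μ(S(I))/|I|^s → 0 as |I| → 0) if and only if ‖μ - μ_r‖_{CM_s} → 0 as r → 1⁻, where ‖ν‖_{CM_s} = sup_{I⊂∂D} ν(S(I))/|I|^s. -/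
open MeasureTheory Complex Real Filter ENNReal NNReal

noncomputable section

/-- vanishing s-Carleson measures via truncation. -/
theorem stmt12 (s : ℝ) (hs0 : 0 < s) (hs1 : s ≤ 1) (μ : Measure ℂ) [IsFiniteMeasure μ]
    (M : ℝ) (hμ : ∀ θ h : ℝ, 0 < h → h ≤ 1 → μ (tent θ h) ≤ ENNReal.ofReal (M * h ^ s)) :
    (∀ ε : ℝ, 0 < ε → ∃ δ : ℝ, 0 < δ ∧ ∀ θ h : ℝ, 0 < h → h < δ →
        μ (tent θ h) ≤ ENNReal.ofReal (ε * h ^ s)) ↔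
    (∀ ε : ℝ, 0 < ε → ∃ r₀ : ℝ, r₀ < 1 ∧ ∀ r : ℝ, r₀ < r → r < 1 →
        ∀ θ h : ℝ, 0 < h → h ≤ 1 →
          μ (tent θ h ∩ {z : ℂ | r ≤ ‖z‖}) ≤ ENNReal.ofReal (ε * h ^ s)) := by
  constructor
  · intro H ε hε
    obtain ⟨δ, hδ, hδ'⟩ := H ε hε
    set h₀ : ℝ := min (δ / 2) (1 / 2) with hh₀def
    have hh₀ : 0 < h₀ := lt_min (by linarith) (by norm_num)
    have hh₀δ : h₀ < δ := lt_of_le_of_lt (min_le_left _ _) (by linarith)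
    set A : ℝ → Set ℂ := fun r => {z : ℂ | r ≤ ‖z‖ ∧ ‖z‖ < 1} with hA
    have hAmeas : ∀ r, MeasurableSet (A r) := by
      intro r
      exact (measurableSet_le measurable_const continuous_norm.measurable).inter
        (measurableSet_lt continuous_norm.measurable measurable_const)
    have hAmono : ∀ ⦃r r' : ℝ⦄, r ≤ r' → A r' ⊆ A r := by
      intro r r' hrr' z hz
      exact ⟨le_trans hrr' hz.1, hz.2⟩
    have hlim : Tendsto (fun n : ℕ => μ (A (1 - 1 / (n + 1)))) atTop (nhds 0) := by
      have hAnt : Antitone (fun n : ℕ => A (1 - 1 / (n + 1))) := by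
        intro m n hmn
        apply hAmono
        have : (1 : ℝ) / (n + 1) ≤ 1 / (m + 1) := by
          apply one_div_le_one_div_of_le (by positivity)
          have : (m:ℝ) ≤ n := Nat.cast_le.mpr hmn
          linarith
        linarith
      have hempty : (⋂ n : ℕ, A (1 - 1 / (n + 1))) = ∅ := by
        ext z
        simp only [Set.mem_iInter, Set.mem_empty_iff_false, iff_false]
        intro hz
        obtain ⟨n, hn⟩ := exists_nat_one_div_lt (show (0:ℝ) < 1 - ‖z‖ by
          linarith [(hz 0).2])
        have := (hz n).1
        linarith
      have := MeasureTheory.tendsto_measure_iInter_atTop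
        (fun n => (hAmeas _).nullMeasurableSet) hAnt ⟨0, measure_ne_top μ _⟩
      rwa [hempty, measure_empty] at this
    have hpos : (0 : ℝ≥0∞) < ENNReal.ofReal (ε * h₀ ^ s) := by
      rw [ENNReal.ofReal_pos]
      exact mul_pos hε (Real.rpow_pos_of_pos hh₀ s)
    obtain ⟨n, hn⟩ := (hlim.eventually_lt_const hpos).exists
    have hlt1 : (1:ℝ) - 1 / (n + 1) < 1 := by
      have : (0:ℝ) < 1 / (n + 1) := by positivity
      linarith
    refine ⟨1 - 1 / (n + 1), hlt1, ?_⟩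
    intro r hr₀r hr1 θ h hh0 hh1
    by_cases hcase : h ≤ h₀
    · calc μ (tent θ h ∩ {z : ℂ | r ≤ ‖z‖}) ≤ μ (tent θ h) :=
            measure_mono Set.inter_subset_left
        _ ≤ ENNReal.ofReal (ε * h ^ s) := hδ' θ h hh0 (lt_of_le_of_lt hcase hh₀δ)
    · push_neg at hcase
      have hsub : tent θ h ∩ {z : ℂ | r ≤ ‖z‖} ⊆ A (1 - 1 / (n + 1)) := by
        intro z hz
        exact hAmono hr₀r.le ⟨hz.2, hz.1.1⟩
      calc μ (tent θ h ∩ {z : ℂ | r ≤ ‖z‖}) ≤ μ (A (1 - 1 / (n + 1))) :=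
            measure_mono hsub
        _ ≤ ENNReal.ofReal (ε * h₀ ^ s) := hn.le
        _ ≤ ENNReal.ofReal (ε * h ^ s) := by
            apply ENNReal.ofReal_le_ofReal
            exact mul_le_mul_of_nonneg_left
              (Real.rpow_le_rpow hh₀.le hcase.le hs0.le) hε.le
  · intro H ε hε
    obtain ⟨r₀, hr₀, hr⟩ := H ε hε
    set r : ℝ := (max r₀ 0 + 1) / 2 with hrdef
    have hmax1 : max r₀ 0 < 1 := max_lt hr₀ one_pos
    have hr₀r : r₀ < r := by
      have : r₀ ≤ max r₀ 0 := le_max_left _ _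
      have : max r₀ 0 < r := by rw [hrdef]; linarith
      linarith
    have hr1 : r < 1 := by rw [hrdef]; linarith
    refine ⟨min (1 - r) 1, lt_min (by linarith) one_pos, ?_⟩
    intro θ h hh0 hhδ
    have hh1r : h < 1 - r := lt_of_lt_of_le hhδ (min_le_left _ _)
    have hh1 : h ≤ 1 := le_of_lt (lt_of_lt_of_le hhδ (min_le_right _ _))
    have hsub : tent θ h ⊆ tent θ h ∩ {z : ℂ | r ≤ ‖z‖} := by
      intro z hz
      refine ⟨hz, ?_⟩
      have := hz.2.1
      simp only [Set.mem_setOf_eq]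
      linarith
    exact le_trans (measure_mono hsub) (hr r hr₀r hr1 θ h hh0 hh1)
end
end

section
/- Let 0 < t < s ≤ 1, γ = (s-t)/2, and let μ be an s-Carleson measure on D. Then there is a constant C such that for every f ∈ Q_t and every subarc I ⊆ ∂D with base point a_I = (1-|I|)e^{iθ} (e^{iθ} the center of I), (1-|a_I|²)^{s-2γ} ∫_{S(I)} ∫_D |f'(w)|² (1-|w|²)^{2s-2γ} / (|1 - ā_I w|^{2(s-2γ)} |1 - w̄ z|^{2s}) dA(w) dμ(z) ≤ C ‖μ‖_{CM_s} ‖f‖²_{Q_t}. -/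
open MeasureTheory Complex Real Filter ENNReal NNReal

noncomputable section

set_option maxHeartbeats 1600000

/-! ### Auxiliary lemmas -/

lemma conj_eq_aux (w : ℂ) : (starRingEnd ℂ) w
    = (‖w‖ : ℂ) * Complex.exp (-(Complex.arg w : ℝ) * Complex.I) := by
  nth_rewrite 1 [← Complex.norm_mul_exp_arg_mul_I w]
  rw [map_mul, ← Complex.exp_conj]
  norm_num

lemma tent_of_close {w z : ℂ} {δ : ℝ} (hw : ‖w‖ < 1) (hz : ‖z‖ < 1)
    (hδ0 : 0 < δ) (hδ : δ ≤ 1/2) (hd : 1 - ‖w‖ < δ)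
    (hm : ‖1 - (starRingEnd ℂ) w * z‖ < δ) :
    z ∈ tent (Complex.arg w) δ := by
  set r := ‖w‖ with hr
  set ρ := ‖z‖ with hρ
  set u := (starRingEnd ℂ) w * z with hu
  have habs_u : ‖u‖ = r * ρ := by
    rw [hu, norm_mul, Complex.norm_conj]
  have h1 : 1 - r * ρ ≤ ‖1 - u‖ := by
    have := norm_sub_norm_le (1 : ℂ) u
    simpa [habs_u] using this
  have hρ0 : 0 ≤ ρ := norm_nonneg z
  have hr0 : 0 ≤ r := norm_nonneg w
  have hrρ : 1 - ρ < δ := by nlinarith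
  have hrlb : 1/2 < r := by linarith
  have hρlb : 1/2 < ρ := by linarith
  have hune : u ≠ 0 := by
    intro h0
    rw [h0] at habs_u
    simp at habs_u
    rcases habs_u with h | h <;> nlinarith
  set ψ := Complex.arg u with hψ
  have hre : u.re = ‖u‖ * Real.cos ψ := by
    rw [Complex.cos_arg hune]
    field_simp [norm_ne_zero_iff.mpr hune]
  have habs2 : (‖u‖)^2 = u.re^2 + u.im^2 := by
    rw [Complex.sq_norm, Complex.normSq_apply]; ring
  have hm2 : (‖1-u‖)^2 = (1 - ‖u‖)^2 + 2 * ‖u‖ * (1 - Real.cos ψ) := by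
    rw [Complex.sq_norm, Complex.normSq_apply]
    simp only [Complex.sub_re, Complex.sub_im, Complex.one_re, Complex.one_im]
    nlinarith [hre, habs2]
  have hcos : 1 - Real.cos ψ < 2 * δ^2 := by
    have hmlt : (‖1-u‖)^2 < δ^2 := by
      have h0 : 0 ≤ ‖1-u‖ := norm_nonneg _
      nlinarith
    nlinarith [sq_nonneg (1 - ‖u‖), habs_u]
  have hψπ : |ψ| ≤ Real.pi := Complex.abs_arg_le_pi u
  have hjordan := Real.cos_le_one_sub_mul_cos_sq hψπ
  have hπ : 0 < Real.pi := Real.pi_pos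
  have hψbound : |ψ| ≤ Real.pi * δ := by
    have hπ2 : 0 < Real.pi ^ 2 := by positivity
    have h2 : 2 * ψ^2 / Real.pi^2 ≤ 1 - Real.cos ψ := by
      have : 2 / Real.pi ^ 2 * ψ ^ 2 = 2 * ψ^2 / Real.pi^2 := by ring
      linarith [hjordan, this.symm.le]
    have h2' : 2 * ψ^2 ≤ (1 - Real.cos ψ) * Real.pi^2 := (div_le_iff₀ hπ2).mp h2
    have h4 : (1 - Real.cos ψ) * Real.pi^2 ≤ 2*δ^2 * Real.pi^2 :=
      mul_le_mul_of_nonneg_right hcos.le hπ2.le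
    have e : 2*δ^2 * Real.pi^2 = 2*((Real.pi*δ)^2) := by ring
    have h3 : ψ^2 ≤ (Real.pi * δ)^2 := by linarith
    calc |ψ| = Real.sqrt (ψ^2) := (Real.sqrt_sq_eq_abs ψ).symm
      _ ≤ Real.sqrt ((Real.pi * δ)^2) := Real.sqrt_le_sqrt h3
      _ = Real.pi * δ := Real.sqrt_sq (by positivity)
  refine ⟨hz, by linarith, Complex.arg w + ψ, by simpa using hψbound, ?_⟩
  have hcwne : (starRingEnd ℂ) w ≠ 0 := by
    simp only [ne_eq, map_eq_zero]
    intro h0; rw [h0] at hr; simp [hr] at hrlb; linarith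
  apply mul_left_cancel₀ hcwne
  have hu' : ((‖u‖ : ℝ) : ℂ) * Complex.exp (ψ * Complex.I) = u :=
    Complex.norm_mul_exp_arg_mul_I u
  rw [← hu]
  rw [conj_eq_aux w]
  rw [show ((r:ℂ) * Complex.exp (-(Complex.arg w : ℝ) * Complex.I)) * ((ρ:ℂ) * Complex.exp ((Complex.arg w + ψ : ℝ) * Complex.I))
      = ((r*ρ : ℝ):ℂ) * (Complex.exp (-(Complex.arg w : ℝ) * Complex.I) * Complex.exp ((Complex.arg w + ψ:ℝ) * Complex.I)) by push_cast; ring,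
    ← Complex.exp_add]
  rw [← hu'] at *
  rw [habs_u]
  congr 1
  push_cast
  ring

lemma carleson_int {s M : ℝ} (hs0 : 0 < s) (hs1 : s ≤ 1) (hM : 0 ≤ M) (μ : Measure ℂ)
    (hμ : ∀ θ h : ℝ, 0 < h → h ≤ 1 → μ (tent θ h) ≤ ENNReal.ofReal (M * h ^ s))
    (θ h : ℝ) (hh0 : 0 < h) (hh1 : h ≤ 1) (w : ℂ) (hw : ‖w‖ < 1) :
    ∫⁻ z in tent θ h, ENNReal.ofReal (1 / ‖1 - (starRingEnd ℂ) w * z‖ ^ (2*s)) ∂μ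
      ≤ ENNReal.ofReal (4 * M * (1 - ‖w‖) ^ (-s)) := by
  set d : ℝ := 1 - ‖w‖ with hd
  have hd0 : 0 < d := by simp [hd]; linarith
  set b : ℝ := d ^ (-(2*s)) with hb
  have hb0 : 0 < b := Real.rpow_pos_of_pos hd0 _
  set g : ℂ → ℝ := fun z => 1 / ‖1 - (starRingEnd ℂ) w * z‖ ^ (2*s) with hg
  have hgm : Measurable g := by
    apply Measurable.div measurable_const
    exact ((Real.continuous_rpow_const (by linarith)).comp
      (continuous_norm.comp (by continuity))).measurable
  have hgnn : ∀ z, 0 ≤ g z := fun z => by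
    apply div_nonneg zero_le_one (Real.rpow_nonneg (norm_nonneg _) _)
  rw [lintegral_eq_lintegral_meas_lt _ (Eventually.of_forall hgnn) hgm.aemeasurable]
  have key : ∀ lam : ℝ, 0 < lam →
      (μ.restrict (tent θ h)) {z | lam < g z} ≤
        (Set.Ioo (0:ℝ) b).indicator (fun lam => ENNReal.ofReal (2*M*lam ^ (-(1/2 : ℝ)))) lam := by
    intro lam hlam
    have hmeas : MeasurableSet {z | lam < g z} := measurableSet_lt measurable_const hgm
    rw [Measure.restrict_apply hmeas]
    set δ : ℝ := lam ^ (-(1/(2*s))) with hδdef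
    have hδ0 : 0 < δ := Real.rpow_pos_of_pos hlam _
    have hsub : ∀ z, lam < g z → ‖1 - (starRingEnd ℂ) w * z‖ < δ := by
      intro z hzg
      set m := ‖1 - (starRingEnd ℂ) w * z‖ with hm
      have hm0 : 0 ≤ m := norm_nonneg _
      have hmpow : m ^ (2*s) < 1/lam := by
        by_cases h0 : m ^ (2*s) = 0
        · rw [hg] at hzg; simp only [hm] at hzg
          rw [← hm, h0] at hzg; simp at hzg; linarith
        · have hp : 0 < m ^ (2*s) := lt_of_le_of_ne (Real.rpow_nonneg hm0 _) (Ne.symm h0)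
          rw [hg] at hzg; simp only [← hm] at hzg
          rw [lt_div_iff₀ hp] at hzg
          rw [lt_div_iff₀ hlam]
          nlinarith
      have := Real.rpow_lt_rpow (Real.rpow_nonneg hm0 _) hmpow (show (0:ℝ) < 1/(2*s) by positivity)
      rwa [← Real.rpow_mul hm0, mul_one_div, div_self (by positivity : (2*s) ≠ 0),
        Real.rpow_one, one_div, ← Real.rpow_neg_one, ← Real.rpow_mul hlam.le,
        show (-1 : ℝ) * (1/(2*s)) = -(1/(2*s)) by ring] at this
    by_cases hcase : lam < b
    · rw [Set.indicator_of_mem (by exact ⟨hlam, hcase⟩)]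
      have hdδ : d < δ := by
        have := Real.rpow_lt_rpow_of_neg hlam hcase
          (show -(1/(2*s)) < 0 by rw [neg_lt_zero]; positivity)
        rwa [hb, ← Real.rpow_mul hd0.le,
          show (-(2*s)) * (-(1/(2*s))) = 1 by field_simp, Real.rpow_one] at this
      have hδs : δ ^ s = lam ^ (-(1/2 : ℝ)) := by
        rw [hδdef, ← Real.rpow_mul hlam.le]
        congr 1
        field_simp
      by_cases hhalf : δ ≤ 1/2
      · have hsubset : {z | lam < g z} ∩ tent θ h ⊆ tent (Complex.arg w) δ := by
          rintro z ⟨hz1, hz2⟩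
          exact tent_of_close hw hz2.1 hδ0 hhalf hdδ (hsub z hz1)
        calc μ ({z | lam < g z} ∩ tent θ h) ≤ μ (tent (Complex.arg w) δ) := measure_mono hsubset
          _ ≤ ENNReal.ofReal (M * δ ^ s) := hμ _ _ hδ0 (by linarith)
          _ ≤ ENNReal.ofReal (2*M*lam ^ (-(1/2:ℝ))) := by
              apply ENNReal.ofReal_le_ofReal
              rw [hδs]
              nlinarith [Real.rpow_nonneg hlam.le (-(1/2:ℝ))]
      · push_neg at hhalf
        calc μ ({z | lam < g z} ∩ tent θ h) ≤ μ (tent θ h) :=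
              measure_mono Set.inter_subset_right
          _ ≤ ENNReal.ofReal (M * h ^ s) := hμ _ _ hh0 hh1
          _ ≤ ENNReal.ofReal (2*M*lam ^ (-(1/2:ℝ))) := by
              apply ENNReal.ofReal_le_ofReal
              rw [← hδs]
              have h1 : h ^ s ≤ 1 := Real.rpow_le_one hh0.le hh1 hs0.le
              have h2 : (1/2 : ℝ) ≤ δ ^ s := by
                calc (1/2 : ℝ) = (1/2 : ℝ) ^ (1:ℝ) := by norm_num
                  _ ≤ (1/2 : ℝ) ^ s := Real.rpow_le_rpow_of_exponent_ge (by norm_num) (by norm_num) hs1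
                  _ ≤ δ ^ s := Real.rpow_le_rpow (by norm_num) hhalf.le hs0.le
              nlinarith
    · push_neg at hcase
      have hδd : δ ≤ d := by
        rcases eq_or_lt_of_le hcase with heq | hlt
        · rw [hδdef, ← heq, hb, ← Real.rpow_mul hd0.le,
            show (-(2*s)) * (-(1/(2*s))) = 1 by field_simp, Real.rpow_one]
        · have := Real.rpow_lt_rpow_of_neg hb0 hlt
            (show -(1/(2*s)) < 0 by rw [neg_lt_zero]; positivity)
          rw [hb, ← Real.rpow_mul hd0.le,
            show (-(2*s)) * (-(1/(2*s))) = 1 by field_simp, Real.rpow_one] at this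
          exact this.le
      have : {z | lam < g z} ∩ tent θ h = ∅ := by
        ext z
        simp only [Set.mem_inter_iff, Set.mem_empty_iff_false, iff_false, not_and]
        intro hz1 hz2
        have h1 := hsub z hz1
        have h2 : 1 - ‖(starRingEnd ℂ) w * z‖ ≤
            ‖1 - (starRingEnd ℂ) w * z‖ := by
          have := norm_sub_norm_le (1 : ℂ) ((starRingEnd ℂ) w * z)
          simpa using this
        rw [norm_mul, Complex.norm_conj] at h2
        have h3 : ‖w‖ * ‖z‖ ≤ ‖w‖ :=
          mul_le_of_le_one_right (norm_nonneg w) hz2.1.le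
        have : d ≤ ‖1 - (starRingEnd ℂ) w * z‖ := by
          rw [hd]; linarith
        linarith
      rw [this, measure_empty]
      exact bot_le
  calc ∫⁻ lam in Set.Ioi (0:ℝ), (μ.restrict (tent θ h)) {z | lam < g z}
      ≤ ∫⁻ lam in Set.Ioi (0:ℝ),
        (Set.Ioo (0:ℝ) b).indicator (fun lam => ENNReal.ofReal (2*M*lam ^ (-(1/2 : ℝ)))) lam := by
        apply setLIntegral_mono' measurableSet_Ioi
        intro lam hlam
        exact key lam hlam
    _ = ∫⁻ lam in Set.Ioo (0:ℝ) b, ENNReal.ofReal (2*M*lam ^ (-(1/2 : ℝ))) := by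
        rw [lintegral_indicator measurableSet_Ioo, Measure.restrict_restrict measurableSet_Ioo,
          Set.inter_eq_self_of_subset_left Set.Ioo_subset_Ioi_self]
    _ = ENNReal.ofReal (∫ lam in Set.Ioo (0:ℝ) b, 2*M*lam ^ (-(1/2 : ℝ))) := by
        rw [ofReal_integral_eq_lintegral_ofReal]
        · have : IntervalIntegrable (fun lam : ℝ => lam ^ (-(1/2:ℝ))) volume 0 b :=
            intervalIntegral.intervalIntegrable_rpow' (by norm_num)
          rw [intervalIntegrable_iff_integrableOn_Ioo_of_le hb0.le] at this
          exact this.const_mul (2*M)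
        · filter_upwards [ae_restrict_mem measurableSet_Ioo] with lam hlam
          have := Real.rpow_nonneg (le_of_lt hlam.1) (-(1/2:ℝ))
          positivity
    _ ≤ ENNReal.ofReal (4 * M * (1 - ‖w‖) ^ (-s)) := by
        apply ENNReal.ofReal_le_ofReal
        rw [← MeasureTheory.integral_Ioc_eq_integral_Ioo,
          ← intervalIntegral.integral_of_le hb0.le]
        rw [intervalIntegral.integral_const_mul, integral_rpow (Or.inl (by norm_num))]
        rw [Real.zero_rpow (by norm_num)]
        have hbs : b ^ (-(1/2:ℝ) + 1) = d ^ (-s) := by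
          rw [hb, ← Real.rpow_mul hd0.le]
          congr 1
          ring
        rw [hbs, ← hd]
        rw [div_eq_mul_inv]
        have : 0 ≤ d ^ (-s) := Real.rpow_nonneg hd0.le _
        nlinarith

lemma one_sub_moeb_sq (a w : ℂ) (hne : 1 - (starRingEnd ℂ) a * w ≠ 0) :
    1 - ‖moeb a w‖^2 =
      (1 - ‖a‖^2)*(1 - ‖w‖^2) / ‖1 - (starRingEnd ℂ) a * w‖^2 := by
  have key : Complex.normSq (1 - (starRingEnd ℂ) a * w) - Complex.normSq (a - w)
      = (1 - Complex.normSq a) * (1 - Complex.normSq w) := by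
    simp [Complex.normSq_apply, Complex.mul_re, Complex.mul_im, Complex.sub_re, Complex.sub_im]
    ring
  have hNB : Complex.normSq (1 - (starRingEnd ℂ) a * w) ≠ 0 := by
    rwa [ne_eq, Complex.normSq_eq_zero]
  rw [moeb, norm_div, div_pow, Complex.sq_norm, Complex.sq_norm, Complex.sq_norm, Complex.sq_norm]
  field_simp
  rw [mul_comm w, eq_div_iff hNB, sub_mul, div_mul_cancel₀ _ hNB]
  linarith [key]

lemma ne_one_sub (a w : ℂ) (ha : ‖a‖ < 1) (hw : ‖w‖ < 1) :
    1 - (starRingEnd ℂ) a * w ≠ 0 := by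
  intro h0
  have h1 : (1 : ℂ) = (starRingEnd ℂ) a * w := by linear_combination h0
  have h2 : ‖(starRingEnd ℂ) a * w‖ < 1 := by
    rw [norm_mul, Complex.norm_conj]
    calc ‖a‖ * ‖w‖ ≤ ‖a‖ * 1 :=
          mul_le_mul_of_nonneg_left hw.le (norm_nonneg a)
      _ < 1 := by simpa using ha
  rw [← h1] at h2; simp at h2

lemma pointwise_bound {t s M F : ℝ} (ht : 0 < t) (hs0 : 0 < s) (hs1 : s ≤ 1)
    (hM : 0 ≤ M) (hF : 0 ≤ F) (a w : ℂ) (ha : ‖a‖ < 1) (hw : ‖w‖ < 1) :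
    (1 - ‖a‖ ^ 2) ^ t *
      (F * (1 - ‖w‖ ^ 2) ^ (s + t) / ‖1 - (starRingEnd ℂ) a * w‖ ^ (2 * t)
        * (4 * M * (1 - ‖w‖) ^ (-s)))
      ≤ 8 * M * (F * (1 - ‖moeb a w‖ ^ 2) ^ t) := by
  have hA : (0:ℝ) < 1 - ‖a‖ ^ 2 := by nlinarith [norm_nonneg a]
  have hW : (0:ℝ) < 1 - ‖w‖ ^ 2 := by nlinarith [norm_nonneg w]
  have hK : (0:ℝ) < 1 - ‖w‖ := by linarith
  set B : ℝ := ‖1 - (starRingEnd ℂ) a * w‖ with hBdef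
  have hB : 0 < B := norm_pos_iff.mpr (ne_one_sub a w ha hw)
  have hmoeb : (1 - ‖moeb a w‖ ^ 2) ^ t
      = (1 - ‖a‖ ^ 2) ^ t * (1 - ‖w‖ ^ 2) ^ t / B ^ (2*t) := by
    rw [one_sub_moeb_sq a w (ne_one_sub a w ha hw), ← hBdef]
    rw [Real.div_rpow (by positivity) (by positivity),
      Real.mul_rpow hA.le hW.le, ← Real.rpow_natCast B 2, ← Real.rpow_mul hB.le]
    norm_num [mul_comm]
  have hsplit : (1 - ‖w‖ ^ 2) ^ (s + t)
      = (1 - ‖w‖ ^ 2) ^ s * (1 - ‖w‖ ^ 2) ^ t := Real.rpow_add hW _ _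
  have hws : (1 - ‖w‖ ^ 2) ^ s * (1 - ‖w‖) ^ (-s) ≤ 2 := by
    have h1 : (1 - ‖w‖ ^ 2) ^ s ≤ 2 * (1 - ‖w‖) ^ s := by
      have h2 : 1 - ‖w‖ ^ 2 ≤ 2 * (1 - ‖w‖) := by
        nlinarith [norm_nonneg w]
      calc (1 - ‖w‖ ^ 2) ^ s ≤ (2 * (1 - ‖w‖)) ^ s :=
            Real.rpow_le_rpow hW.le h2 hs0.le
        _ = 2 ^ s * (1 - ‖w‖) ^ s := Real.mul_rpow (by norm_num) hK.le
        _ ≤ 2 * (1 - ‖w‖) ^ s := by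
            have h5 : (2:ℝ) ^ s ≤ 2 ^ (1:ℝ) :=
              Real.rpow_le_rpow_of_exponent_le (by norm_num) hs1
            have h2' : (0:ℝ) ≤ (1 - ‖w‖) ^ s := Real.rpow_nonneg hK.le _
            nlinarith [h5, Real.rpow_one (2:ℝ)]
    have h3 : (0:ℝ) < (1 - ‖w‖) ^ s := Real.rpow_pos_of_pos hK _
    rw [Real.rpow_neg hK.le]
    calc (1 - ‖w‖ ^ 2) ^ s * ((1 - ‖w‖) ^ s)⁻¹
        ≤ (2 * (1 - ‖w‖) ^ s) * ((1 - ‖w‖) ^ s)⁻¹ := by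
          apply mul_le_mul_of_nonneg_right h1 (by positivity)
      _ = 2 := by field_simp
  have hAt : (0:ℝ) < (1 - ‖a‖ ^ 2) ^ t := Real.rpow_pos_of_pos hA _
  have hWt : (0:ℝ) < (1 - ‖w‖ ^ 2) ^ t := Real.rpow_pos_of_pos hW _
  have hBt : (0:ℝ) < B ^ (2*t) := Real.rpow_pos_of_pos hB _
  rw [hmoeb, hsplit]
  rw [div_eq_mul_inv, div_eq_mul_inv]
  have hKs : (0:ℝ) ≤ (1 - ‖w‖) ^ (-s) := Real.rpow_nonneg hK.le _
  have hWs : (0:ℝ) ≤ (1 - ‖w‖ ^ 2) ^ s := Real.rpow_nonneg hW.le _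
  have expand : (1 - ‖a‖ ^ 2) ^ t *
      (F * ((1 - ‖w‖ ^ 2) ^ s * (1 - ‖w‖ ^ 2) ^ t) * (B ^ (2*t))⁻¹
        * (4 * M * (1 - ‖w‖) ^ (-s)))
      = (4 * M * F * ((1 - ‖a‖ ^ 2) ^ t * (1 - ‖w‖ ^ 2) ^ t * (B ^ (2*t))⁻¹))
          * ((1 - ‖w‖ ^ 2) ^ s * (1 - ‖w‖) ^ (-s)) := by ring
  rw [expand]
  have h8 : 8 * M * (F * ((1 - ‖a‖ ^ 2) ^ t * (1 - ‖w‖ ^ 2) ^ t * (B ^ (2*t))⁻¹))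
      = (4 * M * F * ((1 - ‖a‖ ^ 2) ^ t * (1 - ‖w‖ ^ 2) ^ t * (B ^ (2*t))⁻¹)) * 2 := by
    ring
  rw [h8]
  apply mul_le_mul_of_nonneg_left hws
  positivity

lemma measurableSet_UD : MeasurableSet UD := Metric.isOpen_ball.measurableSet

/-- main Fubini–Carleson estimate in the proof of the Q_t embedding. -/
theorem stmt16 (t s : ℝ) (ht : 0 < t) (hts : t < s) (hs1 : s ≤ 1) (μ : Measure ℂ)
    (M : ℝ) (hM : 0 ≤ M)
    (hμ : ∀ θ h : ℝ, 0 < h → h ≤ 1 → μ (tent θ h) ≤ ENNReal.ofReal (M * h ^ s)) :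
    ∃ C : ℝ, 0 < C ∧ ∀ f : ℂ → ℂ, DifferentiableOn ℂ f UD →
      ∀ θ h : ℝ, 0 < h → h ≤ 1 →
        ENNReal.ofReal ((1 - ‖((1 - h : ℝ) : ℂ) *
              Complex.exp (θ * Complex.I)‖ ^ 2) ^ (s - 2 * ((s - t) / 2))) *
          ∫⁻ z in tent θ h, (∫⁻ w in UD, ENNReal.ofReal
            (‖deriv f w‖ ^ 2 *
                (1 - ‖w‖ ^ 2) ^ (2 * s - 2 * ((s - t) / 2)) /
              (‖1 - (starRingEnd ℂ) (((1 - h : ℝ) : ℂ) *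
                  Complex.exp (θ * Complex.I)) * w‖ ^ (2 * (s - 2 * ((s - t) / 2))) *
                ‖1 - (starRingEnd ℂ) w * z‖ ^ (2 * s)))) ∂μ ≤
          ENNReal.ofReal (C * M) * (qNorm t f) ^ 2 := by
  have hs0 : 0 < s := lt_trans ht hts
  refine ⟨8, by norm_num, ?_⟩
  intro f _hf θ h hh0 hh1
  have e1 : s - 2 * ((s - t) / 2) = t := by ring
  have e2 : 2 * s - 2 * ((s - t) / 2) = s + t := by ring
  rw [e1, e2]
  set a : ℂ := ((1 - h : ℝ) : ℂ) * Complex.exp ((θ:ℝ) * Complex.I) with ha_def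
  have haabs : ‖a‖ = 1 - h := by
    rw [ha_def, norm_mul, Complex.norm_exp_ofReal_mul_I, Complex.norm_real, Real.norm_eq_abs,
      _root_.abs_of_nonneg (by linarith), mul_one]
  have ha1 : ‖a‖ < 1 := by rw [haabs]; linarith
  have haUD : a ∈ UD := by
    rw [UD, mem_ball_zero_iff]; exact ha1
  -- finiteness of μ on the tent
  haveI hfin : IsFiniteMeasure (μ.restrict (tent θ h)) := by
    constructor
    rw [Measure.restrict_apply_univ]
    exact lt_of_le_of_lt (hμ θ h hh0 hh1) ENNReal.ofReal_lt_top
  -- the numerator/denominator pieces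
  set P : ℂ → ℝ := fun w => ‖deriv f w‖ ^ 2 * (1 - ‖w‖ ^ 2) ^ (s + t) /
      ‖1 - (starRingEnd ℂ) a * w‖ ^ (2 * t) with hP
  have hPnn : ∀ w : ℂ, ‖w‖ < 1 → 0 ≤ P w := by
    intro w hw
    apply div_nonneg
    · apply mul_nonneg (by positivity)
      exact Real.rpow_nonneg (by nlinarith [norm_nonneg w]) _
    · exact Real.rpow_nonneg (norm_nonneg _) _
  -- measurability of the integrand as a function of the pair
  have hmble : AEMeasurable (Function.uncurry fun (z w : ℂ) => ENNReal.ofReal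
      (‖deriv f w‖ ^ 2 * (1 - ‖w‖ ^ 2) ^ (s + t) /
        (‖1 - (starRingEnd ℂ) a * w‖ ^ (2 * t) *
          ‖1 - (starRingEnd ℂ) w * z‖ ^ (2 * s))))
      ((μ.restrict (tent θ h)).prod (volume.restrict UD)) := by
    apply Measurable.aemeasurable
    apply ENNReal.measurable_ofReal.comp
    apply Measurable.div
    · apply Measurable.mul
      · exact (continuous_norm.measurable.comp
          ((measurable_deriv f).comp measurable_snd)).pow_const 2
      · exact ((Real.continuous_rpow_const (by positivity)).comp
          (continuous_const.sub ((continuous_norm.comp continuous_snd).pow 2))).measurable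
    · apply Measurable.mul
      · exact ((Real.continuous_rpow_const (by positivity)).comp
          (continuous_norm.comp
            (continuous_const.sub (continuous_const.mul continuous_snd)))).measurable
      · exact ((Real.continuous_rpow_const (by positivity)).comp
          (continuous_norm.comp (continuous_const.sub
            ((Complex.continuous_conj.comp continuous_snd).mul continuous_fst)))).measurable
  calc ENNReal.ofReal ((1 - ‖a‖ ^ 2) ^ t) *
      ∫⁻ z in tent θ h, (∫⁻ w in UD, ENNReal.ofReal
        (‖deriv f w‖ ^ 2 * (1 - ‖w‖ ^ 2) ^ (s + t) /
          (‖1 - (starRingEnd ℂ) a * w‖ ^ (2 * t) *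
            ‖1 - (starRingEnd ℂ) w * z‖ ^ (2 * s)))) ∂μ
      = ENNReal.ofReal ((1 - ‖a‖ ^ 2) ^ t) *
        ∫⁻ w in UD, (∫⁻ z in tent θ h, ENNReal.ofReal
          (‖deriv f w‖ ^ 2 * (1 - ‖w‖ ^ 2) ^ (s + t) /
            (‖1 - (starRingEnd ℂ) a * w‖ ^ (2 * t) *
              ‖1 - (starRingEnd ℂ) w * z‖ ^ (2 * s))) ∂μ) := by
        rw [lintegral_lintegral_swap hmble]
    _ ≤ ENNReal.ofReal ((1 - ‖a‖ ^ 2) ^ t) *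
        ∫⁻ w in UD, ENNReal.ofReal (P w * (4 * M * (1 - ‖w‖) ^ (-s))) := by
        apply mul_le_mul_right
        apply setLIntegral_mono' measurableSet_UD
        intro w hwUD
        have hw : ‖w‖ < 1 := by
          rw [UD, mem_ball_zero_iff] at hwUD; exact hwUD
        have hid : ∀ z : ℂ, (‖deriv f w‖ ^ 2 * (1 - ‖w‖ ^ 2) ^ (s + t) /
            (‖1 - (starRingEnd ℂ) a * w‖ ^ (2 * t) *
              ‖1 - (starRingEnd ℂ) w * z‖ ^ (2 * s)))
            = P w * (1 / ‖1 - (starRingEnd ℂ) w * z‖ ^ (2 * s)) := by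
          intro z; rw [hP]; ring
        calc (∫⁻ z in tent θ h, ENNReal.ofReal
            (‖deriv f w‖ ^ 2 * (1 - ‖w‖ ^ 2) ^ (s + t) /
              (‖1 - (starRingEnd ℂ) a * w‖ ^ (2 * t) *
                ‖1 - (starRingEnd ℂ) w * z‖ ^ (2 * s))) ∂μ)
            = ∫⁻ z in tent θ h, ENNReal.ofReal (P w) *
                ENNReal.ofReal (1 / ‖1 - (starRingEnd ℂ) w * z‖ ^ (2 * s)) ∂μ := by
              apply lintegral_congr
              intro z
              rw [hid z, ENNReal.ofReal_mul (hPnn w hw)]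
          _ = ENNReal.ofReal (P w) * ∫⁻ z in tent θ h,
                ENNReal.ofReal (1 / ‖1 - (starRingEnd ℂ) w * z‖ ^ (2 * s)) ∂μ :=
              lintegral_const_mul' _ _ ENNReal.ofReal_ne_top
          _ ≤ ENNReal.ofReal (P w) * ENNReal.ofReal (4 * M * (1 - ‖w‖) ^ (-s)) :=
              mul_le_mul_right (carleson_int hs0 hs1 hM μ hμ θ h hh0 hh1 w hw) _
          _ = ENNReal.ofReal (P w * (4 * M * (1 - ‖w‖) ^ (-s))) :=
              (ENNReal.ofReal_mul (hPnn w hw)).symm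
    _ = ∫⁻ w in UD, ENNReal.ofReal ((1 - ‖a‖ ^ 2) ^ t *
          (P w * (4 * M * (1 - ‖w‖) ^ (-s)))) := by
        rw [← lintegral_const_mul' _ _ ENNReal.ofReal_ne_top]
        apply lintegral_congr
        intro w
        rw [← ENNReal.ofReal_mul (Real.rpow_nonneg (by nlinarith [norm_nonneg a]) _)]
    _ ≤ ∫⁻ w in UD, ENNReal.ofReal (8 * M *
          (‖deriv f w‖ ^ 2 * (1 - ‖moeb a w‖ ^ 2) ^ t)) := by
        apply setLIntegral_mono' measurableSet_UD
        intro w hwUD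
        have hw : ‖w‖ < 1 := by
          rw [UD, mem_ball_zero_iff] at hwUD; exact hwUD
        apply ENNReal.ofReal_le_ofReal
        rw [hP]
        exact pointwise_bound ht hs0 hs1 hM (by positivity) a w ha1 hw
    _ = ENNReal.ofReal (8 * M) * ∫⁻ w in UD, ENNReal.ofReal
          (‖deriv f w‖ ^ 2 * (1 - ‖moeb a w‖ ^ 2) ^ t) := by
        rw [← lintegral_const_mul' _ _ ENNReal.ofReal_ne_top]
        apply lintegral_congr
        intro w
        rw [← ENNReal.ofReal_mul (by positivity)]
    _ ≤ ENNReal.ofReal (8 * M) * (qNorm t f) ^ 2 := by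
        apply mul_le_mul_right
        have hle : (∫⁻ w in UD, ENNReal.ofReal
            (‖deriv f w‖ ^ 2 * (1 - ‖moeb a w‖ ^ 2) ^ t))
            ≤ ⨆ b ∈ UD, ∫⁻ z in UD, ENNReal.ofReal
              (‖deriv f z‖ ^ 2 * (1 - ‖moeb b z‖ ^ 2) ^ t) :=
          le_biSup (fun b => ∫⁻ z in UD, ENNReal.ofReal
            (‖deriv f z‖ ^ 2 * (1 - ‖moeb b z‖ ^ 2) ^ t)) haUD
        refine le_trans hle ?_
        set S : ℝ≥0∞ := ⨆ b ∈ UD, ∫⁻ z in UD, ENNReal.ofReal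
          (‖deriv f z‖ ^ 2 * (1 - ‖moeb b z‖ ^ 2) ^ t) with hS
        have hS2 : S = (S ^ (1/2 : ℝ)) ^ 2 := by
          rw [← ENNReal.rpow_natCast (S ^ (1/2:ℝ)) 2, ← ENNReal.rpow_mul]
          norm_num
        rw [qNorm, ← hS]
        calc S = (S ^ (1/2 : ℝ)) ^ 2 := hS2
          _ ≤ (ENNReal.ofReal (‖f 0‖) + S ^ (1/2 : ℝ)) ^ 2 :=
            pow_le_pow_left₀ (by positivity) le_add_self 2
end
end
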